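/- Identifiability on a finite subset: let (P, B) and (P̃, B̃) be two HMMs satisfying positivity and full-column-rank assumptions. Suppose for each observation y there is a set Δ_y = {π_1^y,...,π_X^y, π_{X+1}^y} ⊂ Δ of X+1 probability vectors such that π_1^y,...,π_X^y are linearly independent and π_{X+1}^y = Σ_i β_i π_i^y with all β_i ≠ 0. If T(π, y; P, B) = T(π, y; P̃, B̃) for all π ∈ Δ_y and all y, then P = P̃ and B = B̃. -/

import Mathlib

open Matrix

/-- The HMM filter update `T(π, y; P, B) = diag(b_y) Pᵀ π / (𝟙ᵀ diag(b_y) Pᵀ π)`. -/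
noncomputable def hmmT {X Y : ℕ} (P : Matrix (Fin X) (Fin X) ℝ)
    (B : Matrix (Fin X) (Fin Y) ℝ) (y : Fin Y) (π : Fin X → ℝ) : Fin X → ℝ :=
  (∑ i, ((Matrix.diagonal (fun i => B i y) * Pᵀ).mulVec π) i)⁻¹ •
    (Matrix.diagonal (fun i => B i y) * Pᵀ).mulVec π

lemma filt_entry {X : ℕ} (P : Matrix (Fin X) (Fin X) ℝ) (b v : Fin X → ℝ) (i : Fin X) :
    ((Matrix.diagonal b * Pᵀ).mulVec v) i = b i * ∑ j, P j i * v j := by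
  simp [Matrix.mulVec, dotProduct, Matrix.diagonal_mul, Matrix.transpose_apply,
    Finset.mul_sum, mul_assoc]

lemma filt_pos {X : ℕ} (P : Matrix (Fin X) (Fin X) ℝ) (b v : Fin X → ℝ)
    (hP : ∀ i j, 0 < P i j) (hb : ∀ i, 0 < b i)
    (hv : ∀ j, 0 ≤ v j) (hs : ∑ j, v j = 1) (i : Fin X) :
    0 < ((Matrix.diagonal b * Pᵀ).mulVec v) i := by
  rw [filt_entry]
  apply mul_pos (hb i)
  obtain ⟨j0, hj0⟩ : ∃ j, 0 < v j := by
    by_contra h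
    push_neg at h
    have hz : ∀ j, v j = 0 := fun j => le_antisymm (h j) (hv j)
    simp [hz] at hs
  exact Finset.sum_pos' (fun j _ => mul_nonneg (hP j i).le (hv j))
    ⟨j0, Finset.mem_univ _, mul_pos (hP j0 i) hj0⟩

/-- Identifiability of the HMM filter from a finite set of posteriors: if for each
observation `y` there are `X` linearly independent probability vectors `πs y 0, …,
πs y (X-1)` on the simplex and one more probability vector `πlast y = ∑ i, β y i • πs y i`
with all coefficients nonzero, and the two filters agree on these `X + 1` vectors for
each `y`, then the parameters coincide. -/
theorem hmm_filter_identifiable_subset {X Y : ℕ}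
    (P Pt : Matrix (Fin X) (Fin X) ℝ) (B Bt : Matrix (Fin X) (Fin Y) ℝ)
    (hPpos : ∀ i j, 0 < P i j) (hProw : P.mulVec (fun _ => (1 : ℝ)) = fun _ => 1)
    (hPinv : IsUnit P.det)
    (hPtpos : ∀ i j, 0 < Pt i j) (hPtrow : Pt.mulVec (fun _ => (1 : ℝ)) = fun _ => 1)
    (hPtinv : IsUnit Pt.det)
    (hBpos : ∀ i y, 0 < B i y) (hBrow : B.mulVec (fun _ => (1 : ℝ)) = fun _ => 1)
    (hBrank : B.rank = Y)
    (hBtpos : ∀ i y, 0 < Bt i y) (hBtrow : Bt.mulVec (fun _ => (1 : ℝ)) = fun _ => 1)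
    (hBtrank : Bt.rank = Y)
    (πs : Fin Y → Fin X → (Fin X → ℝ)) (πlast : Fin Y → (Fin X → ℝ))
    (β : Fin Y → Fin X → ℝ)
    (hπsimplex : ∀ y i, (∀ j, 0 ≤ πs y i j) ∧ ∑ j, πs y i j = 1)
    (hπlastsimplex : ∀ y, (∀ j, 0 ≤ πlast y j) ∧ ∑ j, πlast y j = 1)
    (hindep : ∀ y, LinearIndependent ℝ (πs y))
    (hβ : ∀ y i, β y i ≠ 0)
    (hcomb : ∀ y, πlast y = ∑ i, β y i • πs y i)
    (heq : ∀ y : Fin Y, (∀ i, hmmT P B y (πs y i) = hmmT Pt Bt y (πs y i)) ∧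
      hmmT P B y (πlast y) = hmmT Pt Bt y (πlast y)) :
    P = Pt ∧ B = Bt := by
  rcases Nat.eq_zero_or_pos X with hX0 | hX0
  · constructor <;> ext i j <;> exact absurd i.isLt (by omega)
  have hne : Nonempty (Fin X) := ⟨⟨0, hX0⟩⟩
  -- Step 1: for each y there is a scalar c with B i y * P j i = c * (Bt i y * Pt j i).
  have key : ∀ y : Fin Y, ∃ c : ℝ, ∀ i j, B i y * P j i = c * (Bt i y * Pt j i) := by
    intro y
    set M := Matrix.diagonal (fun i => B i y) * Pᵀ with hM
    set Mt := Matrix.diagonal (fun i => Bt i y) * Ptᵀ with hMt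
    have ratio : ∀ v : Fin X → ℝ, (∀ j, 0 ≤ v j) → (∑ j, v j) = 1 →
        hmmT P B y v = hmmT Pt Bt y v →
        ∃ c : ℝ, M.mulVec v = c • Mt.mulVec v := by
      intro v hnn hs hEq
      have hspos : 0 < ∑ i, (M.mulVec v) i :=
        Finset.sum_pos (fun i _ => filt_pos P _ v hPpos (fun i => hBpos i y) hnn hs i)
          Finset.univ_nonempty
      have htpos : 0 < ∑ i, (Mt.mulVec v) i :=
        Finset.sum_pos (fun i _ => filt_pos Pt _ v hPtpos (fun i => hBtpos i y) hnn hs i)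
          Finset.univ_nonempty
      simp only [hmmT] at hEq
      refine ⟨(∑ i, (M.mulVec v) i) * (∑ i, (Mt.mulVec v) i)⁻¹, ?_⟩
      calc M.mulVec v
          = (∑ i, (M.mulVec v) i) • ((∑ i, (M.mulVec v) i)⁻¹ • M.mulVec v) := by
            rw [smul_smul, mul_inv_cancel₀ hspos.ne', one_smul]
        _ = (∑ i, (M.mulVec v) i) • ((∑ i, (Mt.mulVec v) i)⁻¹ • Mt.mulVec v) := by
            rw [← hM, ← hMt] at hEq; rw [hEq]
        _ = _ := by rw [smul_smul]
    choose c hc using fun i => ratio (πs y i) (hπsimplex y i).1 (hπsimplex y i).2 ((heq y).1 i)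
    obtain ⟨cl, hcl⟩ := ratio (πlast y) (hπlastsimplex y).1 (hπlastsimplex y).2 (heq y).2
    -- Mt is invertible
    have hdet : IsUnit Mt.det := by
      rw [hMt, Matrix.det_mul, Matrix.det_diagonal, Matrix.det_transpose]
      exact (isUnit_iff_ne_zero.2 (Finset.prod_ne_zero_iff.2
        fun i _ => (hBtpos i y).ne')).mul hPtinv
    have : Invertible Mt := Matrix.invertibleOfIsUnitDet Mt hdet
    have hinj : Function.Injective Mt.mulVec := Matrix.mulVec_injective_of_invertible Mt
    have hindepMt : LinearIndependent ℝ (fun i => Mt.mulVec (πs y i)) := by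
      have h1 : (fun i => Mt.mulVec (πs y i)) = ⇑Mt.mulVecLin ∘ (πs y) := by
        funext i; simp [Matrix.mulVecLin_apply]
      rw [h1]
      refine (hindep y).map' Mt.mulVecLin ?_
      rw [LinearMap.ker_eq_bot]
      simpa [Function.Injective, Matrix.mulVecLin_apply] using hinj
    -- expand the filter identity at πlast
    have hlin : ∀ (A : Matrix (Fin X) (Fin X) ℝ),
        A.mulVec (πlast y) = ∑ i, β y i • A.mulVec (πs y i) := by
      intro A
      rw [hcomb y, ← Matrix.mulVecLin_apply, map_sum]
      simp [Matrix.mulVecLin_apply]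
    have hexp1 : M.mulVec (πlast y) = ∑ i, (β y i * c i) • Mt.mulVec (πs y i) := by
      rw [hlin M]
      refine Finset.sum_congr rfl fun i _ => ?_
      rw [hc i, smul_smul]
    have hexp2 : M.mulVec (πlast y) = ∑ i, (cl * β y i) • Mt.mulVec (πs y i) := by
      rw [hcl, hlin Mt, Finset.smul_sum]
      refine Finset.sum_congr rfl fun i _ => ?_
      rw [smul_smul]
    have hceq : ∀ i, c i = cl := by
      intro i
      have hz : ∑ i, ((β y i * c i) - (cl * β y i)) • Mt.mulVec (πs y i) = 0 := by
        simp only [sub_smul, Finset.sum_sub_distrib]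
        rw [← hexp1, ← hexp2, sub_self]
      have h0 := (Fintype.linearIndependent_iff.mp hindepMt) _ hz i
      have h1 : β y i * c i = β y i * cl := by linarith
      exact mul_left_cancel₀ (hβ y i) h1
    -- M = cl • Mt as matrices, via the basis πs y
    have hcard : Fintype.card (Fin X) = Module.finrank ℝ (Fin X → ℝ) := by simp
    have hmaps : M.mulVecLin = cl • Mt.mulVecLin := by
      apply (basisOfLinearIndependentOfCardEqFinrank (hindep y) hcard).ext
      intro i
      rw [coe_basisOfLinearIndependentOfCardEqFinrank]
      simp only [Matrix.mulVecLin_apply, LinearMap.smul_apply]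
      rw [hc i, hceq i]
    refine ⟨cl, fun i j => ?_⟩
    have h2 := congrFun (congrArg (fun L => L (Pi.single j 1)) hmaps) i
    simp only [Matrix.mulVecLin_apply, LinearMap.smul_apply, Pi.smul_apply,
      Matrix.mulVec_single, Matrix.col_apply, op_smul_eq_mul, mul_one, smul_eq_mul] at h2
    have hMij : M i j = B i y * P j i := by
      rw [hM, Matrix.diagonal_mul, Matrix.transpose_apply]
    have hMtij : Mt i j = Bt i y * Pt j i := by
      rw [hMt, Matrix.diagonal_mul, Matrix.transpose_apply]
    rw [← hMij, ← hMtij, h2]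
  choose c hc using key
  -- row-sum facts
  have hBsum : ∀ i, ∑ y, B i y = 1 := fun i => by
    simpa [Matrix.mulVec, dotProduct] using congrFun hBrow i
  have hBtsum : ∀ i, ∑ y, Bt i y = 1 := fun i => by
    simpa [Matrix.mulVec, dotProduct] using congrFun hBtrow i
  have hPsum : ∀ j, ∑ i, P j i = 1 := fun j => by
    simpa [Matrix.mulVec, dotProduct] using congrFun hProw j
  have hPtsum : ∀ j, ∑ i, Pt j i = 1 := fun j => by
    simpa [Matrix.mulVec, dotProduct] using congrFun hPtrow j
  -- P j i = s i * Pt j i where s i = ∑ y, c y * Bt i y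
  set s : Fin X → ℝ := fun i => ∑ y, c y * Bt i y with hsdef
  have hPs : ∀ j i, P j i = s i * Pt j i := by
    intro j i
    have h1 : ∑ y, B i y * P j i = ∑ y, c y * (Bt i y * Pt j i) :=
      Finset.sum_congr rfl fun y _ => hc y i j
    rw [← Finset.sum_mul, hBsum i, one_mul] at h1
    rw [h1, hsdef, Finset.sum_mul]
    exact Finset.sum_congr rfl fun y _ => by ring
  have : Invertible Pt := Matrix.invertibleOfIsUnitDet Pt hPtinv
  have hs1 : s = fun _ => (1 : ℝ) := by
    apply Matrix.mulVec_injective_of_invertible Pt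
    funext j
    have h1 : Pt.mulVec s j = ∑ i, Pt j i * s i := by
      simp [Matrix.mulVec, dotProduct]
    have h2 : (Pt.mulVec fun _ => (1 : ℝ)) j = 1 := congrFun hPtrow j
    rw [h1, h2]
    calc ∑ i, Pt j i * s i = ∑ i, P j i := Finset.sum_congr rfl fun i _ => by
          rw [hPs j i]; ring
      _ = 1 := hPsum j
  have hPPt : P = Pt := by
    ext j i
    rw [hPs j i, congrFun hs1 i, one_mul]
  refine ⟨hPPt, ?_⟩
  -- B i y = c y * Bt i y
  have hBc : ∀ i y, B i y = c y * Bt i y := by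
    intro i y
    have h1 := hc y i ⟨0, hX0⟩
    rw [hPPt] at h1
    have h2 : B i y * Pt ⟨0, hX0⟩ i = (c y * Bt i y) * Pt ⟨0, hX0⟩ i := by
      rw [h1]; ring
    exact mul_right_cancel₀ (hPtpos ⟨0, hX0⟩ i).ne' h2
  -- Bt.mulVec is injective since rank Bt = Y
  have hker : LinearMap.ker Bt.mulVecLin = ⊥ := by
    have h1 := LinearMap.finrank_range_add_finrank_ker Bt.mulVecLin
    have h2 : Module.finrank ℝ (LinearMap.range Bt.mulVecLin) = Y := hBtrank
    rw [h2, Module.finrank_fin_fun] at h1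
    have h3 : Module.finrank ℝ (LinearMap.ker Bt.mulVecLin) = 0 := by omega
    exact Submodule.finrank_eq_zero.mp h3
  have hBtinj : Function.Injective Bt.mulVec := by
    have := LinearMap.ker_eq_bot.mp hker
    intro u v huv
    exact this (by simpa [Matrix.mulVecLin_apply] using huv)
  have hc1 : c = fun _ => (1 : ℝ) := by
    apply hBtinj
    funext i
    have h1 : Bt.mulVec c i = ∑ y, Bt i y * c y := by
      simp [Matrix.mulVec, dotProduct]
    have h2 : (Bt.mulVec fun _ => (1 : ℝ)) i = 1 := congrFun hBtrow i
    rw [h1, h2]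
    calc ∑ y, Bt i y * c y = ∑ y, B i y := Finset.sum_congr rfl fun y _ => by
          rw [hBc i y]; ring
      _ = 1 := hBsum i
  ext i y
  rw [hBc i y, congrFun hc1 y, one_mul]
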